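/- arXiv:2309.01800 — 2 statements merged into one kernel-verified Lean document; each statement's English description precedes it below -/
import Mathlib

section
/- Let c_1,...,c_L ∈ [q]^n and let x_1,...,x_L ∈ (∂Δ_ℓ)^n be their images under the coordinatewise embedding φ_ℓ. Then rad_ℓ(c_1,...,c_L) ≤ rad(x_1,...,x_L) + L/n, where rad denotes the relaxed ℓ-radius. -/
open Finset

/-- A probability distribution on a finite type. -/
def IsDist {α : Type*} [Fintype α] (P : α → ℝ) : Prop :=
  (∀ a, 0 ≤ P a) ∧ ∑ a, P a = 1

/-- The collection `X` of `ℓ`-element subsets of `[q]`. -/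
abbrev Subsets (q ℓ : ℕ) := {A : Finset (Fin q) // A.card = ℓ}

/-- The list-recovery distance between `x ∈ [q]^n` and a tuple of `ℓ`-subsets. -/
def dLR {q ℓ n : ℕ} (x : Fin n → Fin q) (Y : Fin n → Subsets q ℓ) : ℕ :=
  (Finset.univ.filter fun j => x j ∉ (Y j).1).card

/-- The `ℓ`-radius `rad_ℓ(c₁,…,c_L) = (1/n) min_{Y∈Xⁿ} max_i d_LR(cᵢ,Y)`. -/
noncomputable def radLtuple {q n L : ℕ} (ℓ : ℕ) (cs : Fin L → Fin n → Fin q) : ℝ :=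
  (1 / (n : ℝ)) * ⨅ Y : Fin n → Subsets q ℓ, ⨆ i : Fin L, (dLR (cs i) Y : ℝ)

/-- The embedding `φ_ℓ : [q] → ∂Δ_ℓ`, `φ_ℓ(i) = ∑_{A∈X : i∈A} e_A`. -/
noncomputable def phiL (q ℓ : ℕ) (i : Fin q) : Subsets q ℓ → ℝ :=
  fun A => if i ∈ A.1 then 1 else 0

/-- `d(x,y) = ∑_j (1/2)(‖x(j) − y(j)‖₁ − C(q−1,ℓ−1) + 1)` on blocks in `ℝ^X`. -/
noncomputable def dvecL {q ℓ n : ℕ} (x y : Fin n → Subsets q ℓ → ℝ) : ℝ :=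
  ∑ j, (1 / 2) * ((∑ A : Subsets q ℓ, |x j A - y j A|) - ((q - 1).choose (ℓ - 1) : ℝ) + 1)

/-- The relaxed `ℓ`-radius `rad(x₁,…,x_L) = (1/n) inf_{y∈Δ_ℓⁿ} max_i d(xᵢ,y)`. -/
noncomputable def radRelaxL {q ℓ n L : ℕ} (xs : Fin L → Fin n → Subsets q ℓ → ℝ) : ℝ :=
  (1 / (n : ℝ)) *
    sInf {r : ℝ | ∃ y : Fin n → Subsets q ℓ → ℝ, (∀ j, IsDist (y j)) ∧ r = ⨆ i, dvecL (xs i) y}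

noncomputable def tim (v r : ℝ) : ℝ := if 0 < r then (1 - v) / r else v / (-r)

lemma tim_pos {v r : ℝ} (h0 : 0 < v) (h1 : v < 1) (hr : r ≠ 0) : 0 < tim v r := by
  unfold tim
  rcases lt_or_gt_of_ne hr with h | h
  · rw [if_neg (by linarith)]
    exact div_pos h0 (by linarith)
  · rw [if_pos h]
    exact div_pos (by linarith) h

lemma tim_bound {v r : ℝ} (h0 : 0 ≤ v) (h1 : v ≤ 1) (hr : r ≠ 0) {t : ℝ}
    (ht0 : 0 ≤ t) (ht : t ≤ tim v r) : 0 ≤ v + t * r ∧ v + t * r ≤ 1 := by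
  unfold tim at ht
  rcases lt_or_gt_of_ne hr with h | h
  · rw [if_neg (by linarith)] at ht
    have hrr : 0 < -r := by linarith
    have : t * (-r) ≤ v := by
      rw [← le_div_iff₀ hrr] at *; exact ht
    constructor <;> nlinarith
  · rw [if_pos h] at ht
    have : t * r ≤ 1 - v := by rw [← le_div_iff₀ h] at *; exact ht
    constructor <;> nlinarith

lemma tim_hit {v r : ℝ} (hr : r ≠ 0) : v + tim v r * r = 1 ∨ v + tim v r * r = 0 := by
  unfold tim
  rcases lt_or_gt_of_ne hr with h | h
  · right
    rw [if_neg (by linarith)]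
    have hne : -r ≠ 0 := by linarith
    field_simp
    ring
  · left
    rw [if_pos h]
    field_simp
    ring

lemma card_ones {q : ℕ} (ℓ : ℕ) (p : Fin q → ℝ) (h01 : ∀ a, p a = 0 ∨ p a = 1)
    (hs : ∑ a, p a = (ℓ : ℝ)) : (univ.filter fun a => p a = 1).card = ℓ := by
  have : ∑ a, p a = ((univ.filter fun a => p a = 1).card : ℝ) := by
    rw [← Finset.sum_boole]
    refine Finset.sum_congr rfl fun a _ => ?_
    rcases h01 a with h | h <;> simp [h]
  rw [this] at hs
  exact_mod_cast hs

/-- Set of fractional entries of `p`. -/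
noncomputable def fracset {n q : ℕ} (p : Fin n → Fin q → ℝ) : Finset (Fin n × Fin q) :=
  univ.filter fun ja => p ja.1 ja.2 ≠ 0 ∧ p ja.1 ja.2 ≠ 1

/-- Set of fractional coordinates of `p`. -/
noncomputable def Fcoords {n q : ℕ} (p : Fin n → Fin q → ℝ) : Finset (Fin n) :=
  univ.filter fun j => ¬ ∀ a, p j a = 0 ∨ p j a = 1

lemma mem_fracset {n q : ℕ} {p : Fin n → Fin q → ℝ} {j : Fin n} {a : Fin q} :
    (j, a) ∈ fracset p ↔ (p j a ≠ 0 ∧ p j a ≠ 1) := by simp [fracset]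

lemma mem_Fcoords {n q : ℕ} {p : Fin n → Fin q → ℝ} {j : Fin n} :
    j ∈ Fcoords p ↔ ∃ a, p j a ≠ 0 ∧ p j a ≠ 1 := by
  simp [Fcoords, not_or]

/-- A fractional coordinate has at least two fractional entries. -/
lemma two_frac {n q ℓ : ℕ} {p : Fin n → Fin q → ℝ} {j : Fin n}
    (hj : j ∈ Fcoords p) (h01 : ∀ a, 0 ≤ p j a) (h11 : ∀ a, p j a ≤ 1) (hs : ∑ a, p j a = (ℓ : ℝ)) :
    ∃ a b, a ≠ b ∧ (p j a ≠ 0 ∧ p j a ≠ 1) ∧ (p j b ≠ 0 ∧ p j b ≠ 1) := by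
  obtain ⟨a, ha⟩ := mem_Fcoords.mp hj
  by_contra hcon
  push_neg at hcon
  have hother : ∀ b, b ≠ a → p j b = 0 ∨ p j b = 1 := by
    intro b hb
    by_contra hbad
    push_neg at hbad
    exact ha.2 (hcon b a hb hbad ha.1)
  set m := ((univ.erase a).filter fun b => p j b = 1).card with hm
  have hsum : ∑ b ∈ univ.erase a, p j b = (m : ℝ) := by
    rw [hm, ← Finset.sum_boole]
    refine Finset.sum_congr rfl fun b hb => ?_
    rcases hother b (Finset.ne_of_mem_erase hb) with h | h <;> simp [h]
  have htot : ∑ b ∈ univ.erase a, p j b + p j a = (ℓ : ℝ) := by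
    rw [Finset.sum_erase_add univ _ (Finset.mem_univ a)]; exact hs
  rw [hsum] at htot
  have hpa : p j a = (ℓ : ℝ) - m := by linarith
  have h0a : 0 < p j a := lt_of_le_of_ne (h01 a) (Ne.symm ha.1)
  have h1a : p j a < 1 := lt_of_le_of_ne (h11 a) ha.2
  rcases le_or_gt (ℓ : ℝ) (m : ℝ) with h | h
  · linarith
  · have : (m : ℕ) < ℓ := by exact_mod_cast h
    have : (m : ℝ) + 1 ≤ (ℓ : ℝ) := by exact_mod_cast this
    linarith

lemma exchange {q n L : ℕ} (ℓ : ℕ) (cs : Fin L → Fin n → Fin q) (p : Fin n → Fin q → ℝ)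
    (h0 : ∀ j a, 0 ≤ p j a) (h1 : ∀ j a, p j a ≤ 1) (hs : ∀ j, ∑ a, p j a = (ℓ : ℝ))
    (hbig : L + 1 ≤ (Fcoords p).card) :
    ∃ p' : Fin n → Fin q → ℝ,
      (fracset p').card < (fracset p).card ∧
      (∀ j a, 0 ≤ p' j a) ∧ (∀ j a, p' j a ≤ 1) ∧ (∀ j, ∑ a, p' j a = (ℓ : ℝ)) ∧
      (∀ i, ∑ j, (1 - p' j (cs i j)) = ∑ j, (1 - p j (cs i j))) := by
  classical
  obtain ⟨G, hGsub, hGcard⟩ := Finset.exists_subset_card_eq (s := Fcoords p) (n := L + 1) hbig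
  let e := Finset.equivFinOfCardEq hGcard
  set jk : Fin (L + 1) → Fin n := fun k => (e.symm k).1 with hjkdef
  have hjk_mem : ∀ k, jk k ∈ Fcoords p := fun k => hGsub (e.symm k).2
  have hjk_inj : Function.Injective jk := by
    intro k1 k2 h
    have := Subtype.ext (p := fun x => x ∈ G) h
    exact e.symm.injective this
  have htf : ∀ k, ∃ a b, a ≠ b ∧ (p (jk k) a ≠ 0 ∧ p (jk k) a ≠ 1)
      ∧ (p (jk k) b ≠ 0 ∧ p (jk k) b ≠ 1) :=
    fun k => two_frac (hjk_mem k) (h0 _) (h1 _) (hs _)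
  choose ak bk hab hfa hfb using htf
  -- linear dependence
  set v : Fin (L + 1) → Fin L → ℝ := fun k i =>
    (if cs i (jk k) = ak k then (1:ℝ) else 0) - (if cs i (jk k) = bk k then 1 else 0) with hvdef
  have hnli : ¬ LinearIndependent ℝ v := by
    intro h
    have hc := h.fintype_card_le_finrank
    rw [Module.finrank_pi] at hc
    simp only [Fintype.card_fin] at hc
    omega
  obtain ⟨g, hg0, k0, hk0⟩ := Fintype.not_linearIndependent_iff.mp hnli
  set delta : Fin n → Fin q → ℝ := fun j c => ∑ k, if j = jk k then
    g k * ((if c = ak k then (1:ℝ) else 0) - (if c = bk k then 1 else 0)) else 0 with hddef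
  have hdelta_at : ∀ k c, delta (jk k) c
      = g k * ((if c = ak k then (1:ℝ) else 0) - (if c = bk k then 1 else 0)) := by
    intro k c
    show (∑ k', if jk k = jk k' then
      g k' * ((if c = ak k' then (1:ℝ) else 0) - (if c = bk k' then 1 else 0)) else 0) = _
    rw [Finset.sum_eq_single k]
    · rw [if_pos rfl]
    · intro k' _ hk'
      rw [if_neg (fun h => hk' (hjk_inj h.symm))]
    · intro h
      exact absurd (Finset.mem_univ k) h
  have hdelta_ne : ∀ j c, delta j c ≠ 0 →
      ∃ k, g k ≠ 0 ∧ j = jk k ∧ (c = ak k ∨ c = bk k) := by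
    intro j c hd
    obtain ⟨k, _, hk⟩ := Finset.exists_ne_zero_of_sum_ne_zero hd
    by_cases hj : j = jk k
    · rw [if_pos hj] at hk
      refine ⟨k, fun h => hk (by rw [h]; ring), hj, ?_⟩
      by_contra hc
      push_neg at hc
      rw [if_neg hc.1, if_neg hc.2] at hk
      exact hk (by ring)
    · rw [if_neg hj] at hk
      exact absurd rfl hk
  have hdelta_int : ∀ j c, (p j c = 0 ∨ p j c = 1) → delta j c = 0 := by
    intro j c hint
    by_contra hd
    obtain ⟨k, _, hj, hc⟩ := hdelta_ne j c hd
    rcases hc with hc | hc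
    · rw [hj, hc] at hint
      rcases hint with h | h
      · exact (hfa k).1 h
      · exact (hfa k).2 h
    · rw [hj, hc] at hint
      rcases hint with h | h
      · exact (hfb k).1 h
      · exact (hfb k).2 h
  have hrow : ∀ j, ∑ c, delta j c = 0 := by
    intro j
    rw [hddef, Finset.sum_comm]
    refine Finset.sum_eq_zero fun k _ => ?_
    by_cases hj : j = jk k
    · simp only [if_pos hj]
      rw [← Finset.mul_sum, Finset.sum_sub_distrib]
      rw [Finset.sum_ite_eq' univ (ak k) (fun _ => (1:ℝ)),
        Finset.sum_ite_eq' univ (bk k) (fun _ => (1:ℝ))]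
      simp
    · simp only [if_neg hj]
      exact Finset.sum_const_zero
  have hcode : ∀ i, ∑ j, delta j (cs i j) = 0 := by
    intro i
    have h2 : ∑ j, delta j (cs i j) = ∑ k, g k * v k i := by
      rw [hddef, Finset.sum_comm]
      refine Finset.sum_congr rfl fun k _ => ?_
      rw [Finset.sum_ite_eq' univ (jk k)
        (fun j => g k * ((if cs i j = ak k then (1:ℝ) else 0) - (if cs i j = bk k then 1 else 0)))]
      rw [if_pos (Finset.mem_univ _), hvdef]
    rw [h2]
    have := congrFun hg0 i
    simpa using this
  -- choose the step size
  set K : Finset (Fin (L + 1)) := univ.filter (fun k => g k ≠ 0) with hKdef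
  have hk0K : k0 ∈ K := by simp [hKdef, hk0]
  set tfun : Fin (L + 1) → ℝ := fun k =>
    min (tim (p (jk k) (ak k)) (g k)) (tim (p (jk k) (bk k)) (-(g k))) with htfdef
  have hTne : (K.image tfun).Nonempty := ⟨tfun k0, Finset.mem_image_of_mem tfun hk0K⟩
  set tst : ℝ := (K.image tfun).min' hTne with htstdef
  obtain ⟨ks, hksK, hks⟩ := Finset.mem_image.mp ((K.image tfun).min'_mem hTne)
  have hgks : g ks ≠ 0 := (Finset.mem_filter.mp hksK).2
  have hfrac : ∀ k (c : Fin q), (p (jk k) c ≠ 0 ∧ p (jk k) c ≠ 1) →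
      0 < p (jk k) c ∧ p (jk k) c < 1 := by
    intro k c hc
    exact ⟨lt_of_le_of_ne (h0 _ _) (Ne.symm hc.1), lt_of_le_of_ne (h1 _ _) hc.2⟩
  have htpos : 0 < tst := by
    rw [htstdef, ← hks, htfdef]
    have h1' := hfrac ks (ak ks) (hfa ks)
    have h2' := hfrac ks (bk ks) (hfb ks)
    exact lt_min (tim_pos h1'.1 h1'.2 hgks) (tim_pos h2'.1 h2'.2 (neg_ne_zero.mpr hgks))
  have htle : ∀ k ∈ K, tst ≤ tfun k := fun k hk =>
    Finset.min'_le _ _ (Finset.mem_image_of_mem tfun hk)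
  set p' : Fin n → Fin q → ℝ := fun j c => p j c + tst * delta j c with hp'def
  -- bounds
  have hbnd : ∀ j c, 0 ≤ p' j c ∧ p' j c ≤ 1 := by
    intro j c
    by_cases hd : delta j c = 0
    · rw [hp'def]
      simp only [hd, mul_zero, add_zero]
      exact ⟨h0 j c, h1 j c⟩
    · obtain ⟨k, hgk, hj, hc⟩ := hdelta_ne j c hd
      have hkK : k ∈ K := by simp [hKdef, hgk]
      rcases hc with hc | hc
      · subst hj
        subst hc
        have hdc : delta (jk k) (ak k) = g k := by
          rw [hdelta_at k (ak k), if_pos rfl, if_neg (hab k)]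
          ring
        have hfr := hfrac k (ak k) (hfa k)
        have hb := tim_bound (le_of_lt hfr.1) (le_of_lt hfr.2) hgk (le_of_lt htpos)
          (le_trans (htle k hkK) (min_le_left _ _))
        show 0 ≤ p (jk k) (ak k) + tst * delta (jk k) (ak k)
          ∧ p (jk k) (ak k) + tst * delta (jk k) (ak k) ≤ 1
        rw [hdc]
        exact hb
      · subst hj
        subst hc
        have hdc : delta (jk k) (bk k) = -(g k) := by
          rw [hdelta_at k (bk k), if_neg (fun h => hab k h.symm), if_pos rfl]
          ring
        have hfr := hfrac k (bk k) (hfb k)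
        have hb := tim_bound (le_of_lt hfr.1) (le_of_lt hfr.2) (neg_ne_zero.mpr hgk)
          (le_of_lt htpos) (le_trans (htle k hkK) (min_le_right _ _))
        show 0 ≤ p (jk k) (bk k) + tst * delta (jk k) (bk k)
          ∧ p (jk k) (bk k) + tst * delta (jk k) (bk k) ≤ 1
        rw [hdc]
        exact hb
  -- the entry that becomes integral
  have hstar : ∃ es : Fin n × Fin q, es ∈ fracset p ∧ (p' es.1 es.2 = 0 ∨ p' es.1 es.2 = 1) := by
    rcases le_total (tim (p (jk ks) (ak ks)) (g ks)) (tim (p (jk ks) (bk ks)) (-(g ks))) with h | h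
    · refine ⟨(jk ks, ak ks), mem_fracset.mpr (hfa ks), ?_⟩
      have hdc : delta (jk ks) (ak ks) = g ks := by
        rw [hdelta_at ks (ak ks), if_pos rfl, if_neg (hab ks)]
        ring
      have hts : tst = tim (p (jk ks) (ak ks)) (g ks) := by
        rw [htstdef, ← hks]
        exact min_eq_left h
      rcases tim_hit (v := p (jk ks) (ak ks)) hgks with hh | hh
      · right
        show p (jk ks) (ak ks) + tst * delta (jk ks) (ak ks) = 1
        rw [hdc, hts]
        linarith [hh]
      · left
        show p (jk ks) (ak ks) + tst * delta (jk ks) (ak ks) = 0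
        rw [hdc, hts]
        linarith [hh]
    · refine ⟨(jk ks, bk ks), mem_fracset.mpr (hfb ks), ?_⟩
      have hdc : delta (jk ks) (bk ks) = -(g ks) := by
        rw [hdelta_at ks (bk ks), if_neg (fun h' => hab ks h'.symm), if_pos rfl]
        ring
      have hts : tst = tim (p (jk ks) (bk ks)) (-(g ks)) := by
        rw [htstdef, ← hks]
        exact min_eq_right h
      rcases tim_hit (v := p (jk ks) (bk ks)) (neg_ne_zero.mpr hgks) with hh | hh
      · right
        show p (jk ks) (bk ks) + tst * delta (jk ks) (bk ks) = 1
        rw [hdc, hts]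
        linarith [hh]
      · left
        show p (jk ks) (bk ks) + tst * delta (jk ks) (bk ks) = 0
        rw [hdc, hts]
        linarith [hh]
  obtain ⟨es, hesF, hesInt⟩ := hstar
  refine ⟨p', ?_, fun j a => (hbnd j a).1, fun j a => (hbnd j a).2, ?_, ?_⟩
  · -- cardinality decreases
    have hsub : fracset p' ⊆ (fracset p).erase es := by
      intro x hx
      have hx' := mem_fracset.mp (by rwa [← Prod.mk.eta (p := x)] at hx)
      rw [Finset.mem_erase]
      constructor
      · intro hxe
        rw [hxe] at hx'
        rcases hesInt with h | h
        · exact hx'.1 h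
        · exact hx'.2 h
      · rw [← Prod.mk.eta (p := x), mem_fracset]
        by_contra hc
        push_neg at hc
        have hint : p x.1 x.2 = 0 ∨ p x.1 x.2 = 1 := by
          by_cases h : p x.1 x.2 = 0
          · exact Or.inl h
          · exact Or.inr (hc h)
        have : p' x.1 x.2 = p x.1 x.2 := by
          rw [hp'def]
          simp [hdelta_int x.1 x.2 hint]
        rw [this] at hx'
        rcases hint with h | h
        · exact hx'.1 h
        · exact hx'.2 h
    calc (fracset p').card ≤ ((fracset p).erase es).card := Finset.card_le_card hsub
      _ < (fracset p).card := Finset.card_erase_lt_of_mem hesF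
  · intro j
    have hexp : ∀ a, p' j a = p j a + tst * delta j a := fun a => rfl
    rw [Finset.sum_congr rfl (fun a _ => hexp a), Finset.sum_add_distrib,
      ← Finset.mul_sum, hrow j, hs j]
    ring
  · intro i
    have hexp : ∀ j, 1 - p' j (cs i j)
        = (1 - p j (cs i j)) - tst * delta j (cs i j) := fun j => by
      show 1 - (p j (cs i j) + tst * delta j (cs i j)) = _
      ring
    rw [Finset.sum_congr rfl (fun j _ => hexp j), Finset.sum_sub_distrib,
      ← Finset.mul_sum, hcode i]
    ring

lemma sum_subtype_subsets {q ℓ : ℕ} (f : Finset (Fin q) → ℝ) :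
    ∑ A : Subsets q ℓ, f A.1 = ∑ B ∈ Finset.powersetCard ℓ (univ : Finset (Fin q)), f B :=
  (Finset.sum_subtype _ (fun B => Finset.mem_powersetCard_univ) f).symm

lemma card_erase_univ {q : ℕ} (a : Fin q) : ((univ : Finset (Fin q)).erase a).card = q - 1 := by
  rw [Finset.card_erase_of_mem (Finset.mem_univ a)]
  simp

lemma countA {q ℓ : ℕ} (hl1 : 1 ≤ ℓ) (a : Fin q) :
    ∑ A : Subsets q ℓ, (if a ∈ A.1 then (1 : ℝ) else 0) = ((q - 1).choose (ℓ - 1) : ℝ) := by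
  rw [sum_subtype_subsets (fun B => if a ∈ B then (1:ℝ) else 0), Finset.sum_boole]
  norm_cast
  rw [show q - 1 = ((univ : Finset (Fin q)).erase a).card from (card_erase_univ a).symm,
    ← Finset.card_powersetCard (ℓ - 1) ((univ : Finset (Fin q)).erase a)]
  · apply Finset.card_bij (fun B _ => B.erase a)
    · intro B hB
      simp only [Finset.mem_filter, Finset.mem_powersetCard_univ] at hB
      rw [Finset.mem_powersetCard]
      refine ⟨fun x hx => ?_, ?_⟩
      · rw [Finset.mem_erase] at hx ⊢
        exact ⟨hx.1, Finset.mem_univ _⟩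
      · rw [Finset.card_erase_of_mem hB.2, hB.1]
    · intro B1 h1 B2 h2 he
      simp only [Finset.mem_filter] at h1 h2
      rw [← Finset.insert_erase h1.2, ← Finset.insert_erase h2.2, he]
    · intro C hC
      rw [Finset.mem_powersetCard] at hC
      have haC : a ∉ C := fun h => (Finset.mem_erase.mp (hC.1 h)).1 rfl
      refine ⟨insert a C, ?_, ?_⟩
      · simp only [Finset.mem_filter, Finset.mem_powersetCard_univ]
        constructor
        · rw [Finset.card_insert_of_notMem haC, hC.2]
          omega
        · exact Finset.mem_insert_self a C
      · rw [Finset.erase_insert haC]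

lemma block_dist {q ℓ : ℕ} (hl1 : 1 ≤ ℓ) (a : Fin q) (η : Subsets q ℓ → ℝ) (hη : IsDist η) :
    (1 / 2) * ((∑ A : Subsets q ℓ, |phiL q ℓ a A - η A|) - ((q - 1).choose (ℓ - 1) : ℝ) + 1)
      = 1 - ∑ A : Subsets q ℓ, (if a ∈ A.1 then η A else 0) := by
  have hle : ∀ A, η A ≤ 1 := by
    intro A
    calc η A ≤ ∑ B, η B := Finset.single_le_sum (fun B _ => hη.1 B) (Finset.mem_univ A)
    _ = 1 := hη.2
  have habs : ∀ A : Subsets q ℓ, |phiL q ℓ a A - η A|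
      = (if a ∈ A.1 then (1:ℝ) else 0) + η A - 2 * (if a ∈ A.1 then η A else 0) := by
    intro A
    unfold phiL
    by_cases h : a ∈ A.1
    · simp only [if_pos h]
      rw [abs_of_nonneg (by linarith [hle A])]
      ring
    · simp only [if_neg h]
      rw [abs_of_nonpos (by linarith [hη.1 A])]
      ring
  rw [Finset.sum_congr rfl (fun A _ => habs A)]
  rw [Finset.sum_sub_distrib, Finset.sum_add_distrib, ← Finset.mul_sum, countA hl1, hη.2]
  ring

lemma dLR_cast {q ℓ n : ℕ} (x : Fin n → Fin q) (Y : Fin n → Subsets q ℓ) :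
    (dLR x Y : ℝ) = ∑ j, if x j ∉ (Y j).1 then (1:ℝ) else 0 := by
  rw [Finset.sum_boole, dLR]

lemma round_direct {q ℓ n L : ℕ} (hl1 : 1 ≤ ℓ) (hlq : ℓ ≤ q) (cs : Fin L → Fin n → Fin q)
    (p : Fin n → Fin q → ℝ)
    (h1 : ∀ j a, p j a ≤ 1) (hs : ∀ j, ∑ a, p j a = (ℓ : ℝ))
    (hF : (Fcoords p).card ≤ L) :
    ∃ Y : Fin n → Subsets q ℓ, ∀ i,
      (dLR (cs i) Y : ℝ) ≤ (∑ j, (1 - p j (cs i j))) + L := by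
  classical
  obtain ⟨B0, -, hB0⟩ := Finset.exists_subset_card_eq (s := (univ : Finset (Fin q))) (n := ℓ)
    (by simpa using hlq)
  set A0 : Subsets q ℓ := ⟨B0, hB0⟩ with hA0
  set Y : Fin n → Subsets q ℓ := fun j =>
    if h : ∀ a, p j a = 0 ∨ p j a = 1 then
      ⟨univ.filter (fun a => p j a = 1), card_ones ℓ (p j) h (hs j)⟩
    else A0 with hYdef
  refine ⟨Y, fun i => ?_⟩
  rw [dLR_cast]
  have hterm : ∀ j, (if cs i j ∉ (Y j).1 then (1:ℝ) else 0)
      ≤ (1 - p j (cs i j)) + (if j ∈ Fcoords p then (1:ℝ) else 0) := by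
    intro j
    by_cases h : ∀ a, p j a = 0 ∨ p j a = 1
    · have hYj : Y j = ⟨univ.filter (fun a => p j a = 1), card_ones ℓ (p j) h (hs j)⟩ := by
        rw [hYdef]; exact dif_pos h
      have hnF : j ∉ Fcoords p := by
        rw [mem_Fcoords]
        push_neg
        intro a
        rcases h a with h' | h' <;> simp [h']
      rw [if_neg hnF, hYj]
      rcases h (cs i j) with h' | h'
      · have : cs i j ∉ univ.filter (fun a => p j a = 1) := by
          simp [h']
        rw [if_pos (by simpa using this), h']
        norm_num
      · have : cs i j ∈ univ.filter (fun a => p j a = 1) := by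
          simp [h']
        rw [if_neg (by simpa using this), h']
        norm_num
    · have hFj : j ∈ Fcoords p := by
        rw [Fcoords, Finset.mem_filter]
        exact ⟨Finset.mem_univ j, h⟩
      rw [if_pos hFj]
      have := h1 j (cs i j)
      by_cases hin : cs i j ∉ (Y j).1 <;> simp [hin] <;> linarith
  calc (∑ j, if cs i j ∉ (Y j).1 then (1:ℝ) else 0)
      ≤ ∑ j, ((1 - p j (cs i j)) + (if j ∈ Fcoords p then (1:ℝ) else 0)) :=
        Finset.sum_le_sum fun j _ => hterm j
    _ = (∑ j, (1 - p j (cs i j))) + ((Fcoords p).card : ℝ) := by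
        rw [Finset.sum_add_distrib]
        congr 1
        rw [Finset.sum_ite_mem, Finset.univ_inter, Finset.sum_const]
        simp
    _ ≤ (∑ j, (1 - p j (cs i j))) + L := by
        have : ((Fcoords p).card : ℝ) ≤ L := by exact_mod_cast hF
        linarith


lemma round_induct {q ℓ n L : ℕ} (hl1 : 1 ≤ ℓ) (hlq : ℓ ≤ q) (cs : Fin L → Fin n → Fin q) :
    ∀ N (p : Fin n → Fin q → ℝ), (fracset p).card ≤ N →
    (∀ j a, 0 ≤ p j a) → (∀ j a, p j a ≤ 1) → (∀ j, ∑ a, p j a = (ℓ : ℝ)) →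
    ∃ Y : Fin n → Subsets q ℓ, ∀ i,
      (dLR (cs i) Y : ℝ) ≤ (∑ j, (1 - p j (cs i j))) + L := by
  intro N
  induction N with
  | zero =>
    intro p hN h0 h1 hs
    refine round_direct hl1 hlq cs p h1 hs ?_
    have hemp : fracset p = ∅ := Finset.card_eq_zero.mp (Nat.le_zero.mp hN)
    have hFe : Fcoords p = ∅ := by
      rw [Finset.eq_empty_iff_forall_notMem]
      intro j hj
      obtain ⟨a, ha⟩ := mem_Fcoords.mp hj
      have : (j, a) ∈ fracset p := mem_fracset.mpr ha
      rw [hemp] at this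
      exact absurd this (Finset.notMem_empty _)
    rw [hFe]
    simp
  | succ N ih =>
    intro p hN h0 h1 hs
    by_cases hF : (Fcoords p).card ≤ L
    · exact round_direct hl1 hlq cs p h1 hs hF
    · obtain ⟨p', hcard, h0', h1', hs', heq⟩ := exchange ℓ cs p h0 h1 hs (by omega)
      obtain ⟨Y, hY⟩ := ih p' (by omega) h0' h1' hs'
      exact ⟨Y, fun i => by rw [← heq i]; exact hY i⟩


theorem radL_le_radRelaxL_add (q ℓ n L : ℕ) (hq : 2 ≤ q) (hl1 : 1 ≤ ℓ) (hlq : ℓ < q)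
    (hn : 1 ≤ n) (hL : 2 ≤ L) (cs : Fin L → Fin n → Fin q) :
    radLtuple ℓ cs ≤ radRelaxL (fun i j => phiL q ℓ (cs i j)) + (L : ℝ) / n := by
  classical
  haveI : Nonempty (Fin L) := ⟨⟨0, by omega⟩⟩
  set S : Set ℝ := {r : ℝ | ∃ y : Fin n → Subsets q ℓ → ℝ, (∀ j, IsDist (y j)) ∧
    r = ⨆ i, dvecL ((fun i j => phiL q ℓ (cs i j)) i) y} with hSdef
  obtain ⟨B0, -, hB0⟩ := Finset.exists_subset_card_eq (s := (univ : Finset (Fin q))) (n := ℓ)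
    (by simpa using le_of_lt hlq)
  have hy0 : ∀ j : Fin n, IsDist (fun A : Subsets q ℓ => if A = ⟨B0, hB0⟩ then (1:ℝ) else 0) := by
    intro j
    constructor
    · intro A
      show (0:ℝ) ≤ if A = ⟨B0, hB0⟩ then (1:ℝ) else 0
      split <;> norm_num
    · rw [Finset.sum_ite_eq' univ (⟨B0, hB0⟩ : Subsets q ℓ) (fun _ => (1:ℝ))]
      simp
  have hSne : S.Nonempty :=
    ⟨_, (fun _ A => if A = ⟨B0, hB0⟩ then (1:ℝ) else 0), hy0, rfl⟩
  have key : ∀ r ∈ S, (⨅ Y : Fin n → Subsets q ℓ, ⨆ i, (dLR (cs i) Y : ℝ)) ≤ r + L := by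
    rintro r ⟨y, hy, rfl⟩
    set p : Fin n → Fin q → ℝ := fun j a => ∑ A : Subsets q ℓ, if a ∈ A.1 then y j A else 0
      with hpdef
    have h0 : ∀ j a, 0 ≤ p j a := by
      intro j a
      refine Finset.sum_nonneg fun A _ => ?_
      split
      · exact (hy j).1 A
      · exact le_refl 0
    have h1 : ∀ j a, p j a ≤ 1 := by
      intro j a
      calc p j a ≤ ∑ A : Subsets q ℓ, y j A := by
            refine Finset.sum_le_sum fun A _ => ?_
            split
            · exact le_refl _
            · exact (hy j).1 A
        _ = 1 := (hy j).2
    have hsum : ∀ j, ∑ a, p j a = (ℓ : ℝ) := by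
      intro j
      have : ∑ a, p j a = ∑ A : Subsets q ℓ, ∑ a, (if a ∈ A.1 then y j A else 0) :=
        Finset.sum_comm
      rw [this]
      have hinner : ∀ A : Subsets q ℓ, (∑ a, if a ∈ A.1 then y j A else 0) = (ℓ : ℝ) * y j A := by
        intro A
        rw [Finset.sum_ite_mem, Finset.univ_inter, Finset.sum_const, A.2]
        simp [mul_comm]
      rw [Finset.sum_congr rfl fun A _ => hinner A, ← Finset.mul_sum, (hy j).2, mul_one]
    have hdvec : ∀ i, dvecL (fun j => phiL q ℓ (cs i j)) y = ∑ j, (1 - p j (cs i j)) := by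
      intro i
      unfold dvecL
      exact Finset.sum_congr rfl fun j _ => block_dist hl1 (cs i j) (y j) (hy j)
    obtain ⟨Y, hY⟩ := round_induct hl1 (le_of_lt hlq) cs (fracset p).card p le_rfl h0 h1 hsum
    have hbddB : BddBelow (Set.range fun Y' : Fin n → Subsets q ℓ =>
        ⨆ i, (dLR (cs i) Y' : ℝ)) := by
      refine ⟨0, ?_⟩
      rintro x ⟨Y', rfl⟩
      have h0' : (0:ℝ) ≤ (dLR (cs (Classical.arbitrary (Fin L))) Y' : ℝ) := Nat.cast_nonneg _
      exact le_trans h0' (le_ciSup (f := fun i : Fin L => (dLR (cs i) Y' : ℝ))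
        (Set.Finite.bddAbove (Set.finite_range _)) (Classical.arbitrary (Fin L)))
    refine le_trans (ciInf_le hbddB Y) (ciSup_le fun i => ?_)
    have hLfin : BddAbove (Set.range fun i => dvecL (fun j => phiL q ℓ (cs i j)) y) :=
      Set.Finite.bddAbove (Set.finite_range _)
    have hsup := le_ciSup hLfin i
    calc (dLR (cs i) Y : ℝ) ≤ ∑ j, (1 - p j (cs i j)) + L := hY i
      _ = dvecL (fun j => phiL q ℓ (cs i j)) y + L := by rw [hdvec i]
      _ ≤ (⨆ i, dvecL (fun j => phiL q ℓ (cs i j)) y) + L := by linarith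
  have hinf : (⨅ Y : Fin n → Subsets q ℓ, ⨆ i, (dLR (cs i) Y : ℝ)) - L ≤ sInf S :=
    le_csInf hSne fun r hr => by linarith [key r hr]
  have hnpos : (0:ℝ) < n := by exact_mod_cast hn
  rw [radLtuple, radRelaxL, ← hSdef]
  have hmul : (1 / (n:ℝ)) * (⨅ Y : Fin n → Subsets q ℓ, ⨆ i, (dLR (cs i) Y : ℝ))
      ≤ (1 / (n:ℝ)) * (sInf S + L) := by
    apply mul_le_mul_of_nonneg_left _ (by positivity)
    linarith
  calc (1 / (n:ℝ)) * ⨅ Y : Fin n → Subsets q ℓ, ⨆ i, (dLR (cs i) Y : ℝ)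
      ≤ (1 / (n:ℝ)) * (sInf S + L) := hmul
    _ = (1 / (n:ℝ)) * sInf S + (L:ℝ) / n := by ring
end

section
/- Let q > ℓ ≥ 2 and L > ℓ be integers, and let P be a probability distribution on [q] with P(x) > 0 for all x ∈ [q]. Then for a probability distribution ω on [L], f_ℓ(P,ω) = f_ℓ(P,U_L) if and only if ω = U_L. -/
open Finset

/-- `max_{ω,ℓ}(x₁,…,x_L) = max_{A∈X} ∑_{i : xᵢ ∈ A} ω(i)`. -/
noncomputable def maxOmegaL {q L : ℕ} (ℓ : ℕ) (ω : Fin L → ℝ) (x : Fin L → Fin q) : ℝ :=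
  ⨆ A : Subsets q ℓ, ∑ i ∈ Finset.univ.filter (fun i => x i ∈ A.1), ω i

/-- `f_ℓ(P,ω) = 1 − ∑_{x∈[q]^L} (∏ᵢ P(xᵢ)) · max_{ω,ℓ}(x)`. -/
noncomputable def fL {q L : ℕ} (ℓ : ℕ) (P : Fin q → ℝ) (ω : Fin L → ℝ) : ℝ :=
  1 - ∑ x : Fin L → Fin q, (∏ i, P (x i)) * maxOmegaL ℓ ω x

namespace FLAux

variable {q ℓ L : ℕ}

lemma subsets_nonempty (h : ℓ ≤ q) : Nonempty (Subsets q ℓ) := by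
  obtain ⟨t, -, ht⟩ := Finset.exists_subset_card_eq (s := (Finset.univ : Finset (Fin q))) (n := ℓ)
    (by simpa using h)
  exact ⟨⟨t, ht⟩⟩

/-- weighted sum of coordinates landing in `A` -/
def wsum (A : Finset (Fin q)) (w : Fin L → ℝ) (x : Fin L → Fin q) : ℝ :=
  ∑ i ∈ Finset.univ.filter (fun i => x i ∈ A), w i

lemma maxOmegaL_eq (ω : Fin L → ℝ) (x : Fin L → Fin q) :
    maxOmegaL ℓ ω x = ⨆ A : Subsets q ℓ, wsum A.1 ω x := rfl

lemma wsum_le_maxOmegaL (ω : Fin L → ℝ) (x : Fin L → Fin q) (A : Subsets q ℓ) :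
    wsum A.1 ω x ≤ maxOmegaL ℓ ω x := by
  rw [maxOmegaL_eq]
  exact le_ciSup (f := fun A : Subsets q ℓ => wsum A.1 ω x)
    (Set.Finite.bddAbove (Set.finite_range _)) A

lemma maxOmegaL_le (ω : Fin L → ℝ) (x : Fin L → Fin q) (m : ℝ)
    (hne : Nonempty (Subsets q ℓ)) (h : ∀ A : Subsets q ℓ, wsum A.1 ω x ≤ m) :
    maxOmegaL ℓ ω x ≤ m := by
  rw [maxOmegaL_eq]; exact ciSup_le h

/-- the number of coordinates of `x` equal to `v` -/
def cnt (x : Fin L → Fin q) (v : Fin q) : ℕ := ∑ k, if x k = v then 1 else 0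

lemma cnt_comp (x : Fin L → Fin q) (e : Equiv.Perm (Fin L)) :
    cnt (fun k => x (e k)) = cnt x := by
  funext v
  exact Fintype.sum_equiv e _ _ (fun k => rfl)

lemma card_filter_mem (x : Fin L → Fin q) (A : Finset (Fin q)) :
    (Finset.univ.filter (fun k => x k ∈ A)).card = ∑ v ∈ A, cnt x v := by
  classical
  rw [Finset.card_filter]
  unfold cnt
  rw [Finset.sum_comm]
  apply Finset.sum_congr rfl
  intro k _
  simp [Finset.sum_ite_eq]

noncomputable def AStar (h : ℓ ≤ q) (n : Fin q → ℕ) : Subsets q ℓ :=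
  (Finset.exists_max_image Finset.univ (fun A : Subsets q ℓ => ∑ v ∈ A.1, n v)
    (have := subsets_nonempty h; Finset.univ_nonempty)).choose

lemma AStar_spec (h : ℓ ≤ q) (n : Fin q → ℕ) (A : Subsets q ℓ) :
    ∑ v ∈ A.1, n v ≤ ∑ v ∈ (AStar h n).1, n v :=
  (Finset.exists_max_image Finset.univ (fun A : Subsets q ℓ => ∑ v ∈ A.1, n v)
    (have := subsets_nonempty h; Finset.univ_nonempty)).choose_spec.2 A (mem_univ A)

lemma wsum_uniform (x : Fin L → Fin q) (A : Finset (Fin q)) :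
    wsum A (fun _ => 1 / (L:ℝ)) x = ((∑ v ∈ A, cnt x v : ℕ) : ℝ) / L := by
  unfold wsum
  rw [Finset.sum_const, nsmul_eq_mul, mul_one_div, card_filter_mem]

lemma maxOmegaL_uniform (h : ℓ ≤ q) (hL : 0 < L) (x : Fin L → Fin q) :
    maxOmegaL ℓ (fun _ => 1/(L:ℝ)) x
      = wsum (AStar h (cnt x)).1 (fun _ => 1/(L:ℝ)) x := by
  apply le_antisymm
  · apply maxOmegaL_le _ _ _ (subsets_nonempty h)
    intro A
    rw [wsum_uniform, wsum_uniform]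
    have h2 := AStar_spec h (cnt x) A
    have hL' : (0:ℝ) < L := by exact_mod_cast hL
    rw [div_le_div_iff_of_pos_right hL']
    exact_mod_cast h2
  · exact wsum_le_maxOmegaL _ _ _

lemma prod_comp_perm (P : Fin q → ℝ) (x : Fin L → Fin q) (e : Equiv.Perm (Fin L)) :
    ∏ k, P (x (e k)) = ∏ k, P (x k) := Fintype.prod_equiv e _ _ (fun k => rfl)

lemma sum_mul_wsum (p : (Fin L → Fin q) → ℝ) (F : (Fin L → Fin q) → Finset (Fin q))
    (w : Fin L → ℝ) :
    ∑ x : Fin L → Fin q, p x * wsum (F x) w x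
      = ∑ i : Fin L, (∑ x : Fin L → Fin q, if x i ∈ F x then p x else 0) * w i := by
  classical
  have h1 : ∀ x, p x * wsum (F x) w x = ∑ i, (if x i ∈ F x then p x * w i else 0) := by
    intro x
    simp only [wsum, Finset.mul_sum]
    rw [Finset.sum_filter]
  simp_rw [h1]
  rw [Finset.sum_comm]
  apply Finset.sum_congr rfl
  intro i _
  rw [Finset.sum_mul]
  apply Finset.sum_congr rfl
  intro x _
  split_ifs <;> simp

lemma c_const (h : ℓ ≤ q) (P : Fin q → ℝ) (i j : Fin L) :
    ∑ x : Fin L → Fin q, (if x i ∈ (AStar h (cnt x)).1 then ∏ k, P (x k) else 0)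
      = ∑ x : Fin L → Fin q, (if x j ∈ (AStar h (cnt x)).1 then ∏ k, P (x k) else 0) := by
  classical
  apply Fintype.sum_equiv
    ⟨fun x => x ∘ Equiv.swap i j, fun x => x ∘ Equiv.swap i j,
      fun x => by funext k; simp [Function.comp], fun x => by funext k; simp [Function.comp]⟩
  intro x
  show _ = if (x ∘ Equiv.swap i j) j ∈ (AStar h (cnt (x ∘ Equiv.swap i j))).1
      then ∏ k, P ((x ∘ Equiv.swap i j) k) else 0
  have hc : cnt (x ∘ Equiv.swap i j) = cnt x := cnt_comp x _
  rw [hc]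
  simp only [Function.comp_apply]
  rw [Equiv.swap_apply_right, prod_comp_perm]

lemma wsum_comp_perm (w : Fin L → ℝ) (y : Fin L → Fin q) (π : Equiv.Perm (Fin L))
    (A : Finset (Fin q)) :
    wsum A w (fun k => y (π.symm k))
      = (∑ k, w k) - ∑ k ∈ Finset.univ.filter (fun k => y k ∉ A), w (π k) := by
  classical
  simp only [wsum]
  rw [Finset.sum_filter, Finset.sum_filter]
  rw [show (∑ k, if y (π.symm k) ∈ A then w k else 0)
      = ∑ m, (if y m ∈ A then w (π m) else 0) from
    (Fintype.sum_equiv π (fun m => if y m ∈ A then w (π m) else 0) _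
      (fun m => by simp)).symm]
  rw [show (∑ k, w k) = ∑ k, w (π k) from (Equiv.sum_comp π w).symm]
  rw [← Finset.sum_sub_distrib]
  apply Finset.sum_congr rfl
  intro m _
  by_cases hm : y m ∈ A <;> simp [hm]

/-- The base tuple: coordinates `0,…,ℓ-1` get distinct values, all others get value `ℓ`. -/
def ybase (hlq : ℓ < q) : Fin L → Fin q :=
  fun k => ⟨min k.1 ℓ, lt_of_le_of_lt (min_le_right _ _) hlq⟩

lemma ybase_image (hlq : ℓ < q) (hLl : ℓ < L) :
    Finset.image (ybase (L := L) hlq) Finset.univ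
      = Finset.image (fun m : Fin (ℓ+1) => Fin.castLE hlq m) Finset.univ := by
  ext v
  simp only [Finset.mem_image, Finset.mem_univ, true_and]
  constructor
  · rintro ⟨k, rfl⟩
    exact ⟨⟨min k.1 ℓ, Nat.lt_succ_of_le (min_le_right _ _)⟩, rfl⟩
  · rintro ⟨m, rfl⟩
    refine ⟨⟨m.1, lt_of_le_of_lt (Nat.lt_succ_iff.mp m.2) hLl⟩, ?_⟩
    apply Fin.ext
    simp [ybase, Nat.min_eq_left (Nat.lt_succ_iff.mp m.2)]

lemma ybase_image_card (hlq : ℓ < q) (hLl : ℓ < L) :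
    (Finset.image (ybase (L := L) hlq) Finset.univ).card = ℓ + 1 := by
  rw [ybase_image hlq hLl, Finset.card_image_of_injective _ (Fin.castLE_injective _)]
  simp

lemma ybase_fiber (hlq : ℓ < q) (hLl : ℓ < L) (v : Fin q) (hv : v.1 < ℓ) :
    Finset.univ.filter (fun k => ybase hlq k = v)
      = {(⟨v.1, lt_trans hv hLl⟩ : Fin L)} := by
  ext k
  simp only [Finset.mem_filter, Finset.mem_univ, true_and, Finset.mem_singleton,
    Fin.ext_iff, ybase]
  omega

lemma filter_not_mem_erase (hlq : ℓ < q) (t : Fin q) :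
    Finset.univ.filter
        (fun k : Fin L => ybase hlq k ∉ (Finset.image (ybase (L := L) hlq) Finset.univ).erase t)
      = Finset.univ.filter (fun k => ybase hlq k = t) := by
  ext k
  simp only [Finset.mem_filter, Finset.mem_univ, true_and, Finset.mem_erase, not_and]
  constructor
  · intro h
    by_contra hne
    exact h hne (Finset.mem_image_of_mem _ (Finset.mem_univ k))
  · intro h
    intro hne _
    exact hne h

lemma D_singleton (hl2 : 2 ≤ ℓ) (hlq : ℓ < q) (hLl : ℓ < L) :
    ∃ d : Fin L,
      Finset.univ.filter
          (fun k : Fin L => ybase hlq k ∉ (AStar hlq.le (cnt (ybase (L := L) hlq))).1) = {d} := by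
  classical
  have hL0 : 0 < L := by omega
  have hVcard : (Finset.image (ybase (L := L) hlq) Finset.univ).card = ℓ + 1 :=
    ybase_image_card hlq hLl
  have hv0val : (ybase (L := L) hlq ⟨0, hL0⟩).1 < ℓ := by
    simp only [ybase]
    omega
  have hv0mem : ybase hlq (⟨0, hL0⟩ : Fin L) ∈ Finset.image (ybase (L := L) hlq) Finset.univ :=
    Finset.mem_image_of_mem _ (Finset.mem_univ _)
  have hBcard :
      ((Finset.image (ybase (L := L) hlq) Finset.univ).erase
        (ybase hlq ⟨0, hL0⟩)).card = ℓ := by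
    rw [Finset.card_erase_of_mem hv0mem, hVcard]
    omega
  have hspecB :
      (Finset.univ.filter (fun k : Fin L => ybase hlq k ∈
          (Finset.image (ybase (L := L) hlq) Finset.univ).erase (ybase hlq ⟨0, hL0⟩))).card
        ≤ (Finset.univ.filter
            (fun k : Fin L => ybase hlq k ∈ (AStar hlq.le (cnt (ybase (L := L) hlq))).1)).card := by
    have := AStar_spec hlq.le (cnt (ybase (L := L) hlq)) ⟨_, hBcard⟩
    rwa [← card_filter_mem, ← card_filter_mem] at this
  have hBnot :
      (Finset.univ.filter (fun k : Fin L => ybase hlq k ∉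
          (Finset.image (ybase (L := L) hlq) Finset.univ).erase (ybase hlq ⟨0, hL0⟩))).card
        = 1 := by
    rw [filter_not_mem_erase hlq, ybase_fiber hlq hLl _ hv0val]
    simp
  have hsplitB :
      (Finset.univ.filter (fun k : Fin L => ybase hlq k ∈
          (Finset.image (ybase (L := L) hlq) Finset.univ).erase (ybase hlq ⟨0, hL0⟩))).card
        + (Finset.univ.filter (fun k : Fin L => ybase hlq k ∉
          (Finset.image (ybase (L := L) hlq) Finset.univ).erase (ybase hlq ⟨0, hL0⟩))).card
        = L := by
    have := Finset.card_filter_add_card_filter_not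
      (s := (Finset.univ : Finset (Fin L)))
      (p := fun k => ybase hlq k ∈
        (Finset.image (ybase (L := L) hlq) Finset.univ).erase (ybase hlq ⟨0, hL0⟩))
    simpa using this
  have hsplitA :
      (Finset.univ.filter
          (fun k : Fin L => ybase hlq k ∈ (AStar hlq.le (cnt (ybase (L := L) hlq))).1)).card
        + (Finset.univ.filter
          (fun k : Fin L => ybase hlq k ∉ (AStar hlq.le (cnt (ybase (L := L) hlq))).1)).card
        = L := by
    have := Finset.card_filter_add_card_filter_not
      (s := (Finset.univ : Finset (Fin L)))
      (p := fun k => ybase hlq k ∈ (AStar hlq.le (cnt (ybase (L := L) hlq))).1)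
    simpa using this
  have hA0notle :
      (Finset.univ.filter
        (fun k : Fin L => ybase hlq k ∉ (AStar hlq.le (cnt (ybase (L := L) hlq))).1)).card ≤ 1 := by
    omega
  have hA0notge :
      1 ≤ (Finset.univ.filter
        (fun k : Fin L => ybase hlq k ∉ (AStar hlq.le (cnt (ybase (L := L) hlq))).1)).card := by
    by_contra hcon
    push_neg at hcon
    have hempty : Finset.univ.filter
        (fun k : Fin L => ybase hlq k ∉ (AStar hlq.le (cnt (ybase (L := L) hlq))).1) = ∅ :=
      Finset.card_eq_zero.mp (by omega)
    have hsub : Finset.image (ybase (L := L) hlq) Finset.univ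
        ⊆ (AStar hlq.le (cnt (ybase (L := L) hlq))).1 := by
      intro v hv
      obtain ⟨k, -, rfl⟩ := Finset.mem_image.mp hv
      by_contra hk
      have hmem : k ∈ Finset.univ.filter
          (fun k : Fin L => ybase hlq k ∉ (AStar hlq.le (cnt (ybase (L := L) hlq))).1) :=
        Finset.mem_filter.mpr ⟨Finset.mem_univ _, hk⟩
      rw [hempty] at hmem
      simp at hmem
    have hle := Finset.card_le_card hsub
    rw [hVcard, (AStar hlq.le (cnt (ybase (L := L) hlq))).2] at hle
    omega
  exact Finset.card_eq_one.mp (le_antisymm hA0notle hA0notge)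

lemma omega_le (hl2 : 2 ≤ ℓ) (hlq : ℓ < q) (hLl : ℓ < L)
    (ω : Fin L → ℝ) (hω1 : ∑ k, ω k = 1)
    (Heq : ∀ x : Fin L → Fin q, maxOmegaL ℓ ω x = wsum (AStar hlq.le (cnt x)).1 ω x)
    (i j : Fin L) (hij : i ≠ j) : ω i ≤ ω j := by
  classical
  obtain ⟨d, hd⟩ := D_singleton hl2 hlq hLl
  have hL0 : 0 < L := by omega
  have hL1 : 1 < L := by omega
  obtain ⟨e0, he0d, he0val⟩ : ∃ e0 : Fin L, e0 ≠ d ∧ (e0 : ℕ) < ℓ := by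
    by_cases h : d = ⟨0, hL0⟩
    · exact ⟨⟨1, hL1⟩, by simp [h, Fin.ext_iff], by show (1:ℕ) < ℓ; omega⟩
    · exact ⟨⟨0, hL0⟩, fun hh => h hh.symm, by show (0:ℕ) < ℓ; omega⟩
  have hfib : Finset.univ.filter (fun k : Fin L => ybase hlq k = ybase hlq e0) = {e0} := by
    have h1 : (ybase (L := L) hlq e0).1 < ℓ := by
      simp only [ybase]
      omega
    rw [ybase_fiber hlq hLl _ h1]
    congr 1
    apply Fin.ext
    simp only [ybase]
    omega
  have hVcard : (Finset.image (ybase (L := L) hlq) Finset.univ).card = ℓ + 1 :=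
    ybase_image_card hlq hLl
  have hemem : ybase hlq e0 ∈ Finset.image (ybase (L := L) hlq) Finset.univ :=
    Finset.mem_image_of_mem _ (Finset.mem_univ _)
  have hBcard : ((Finset.image (ybase (L := L) hlq) Finset.univ).erase
      (ybase hlq e0)).card = ℓ := by
    rw [Finset.card_erase_of_mem hemem, hVcard]
    omega
  -- the permutation sending d to i and e0 to j
  have hs1d : Equiv.swap d i d = i := Equiv.swap_apply_left d i
  have hne1 : i ≠ Equiv.swap d i e0 := by
    intro h
    have h2 : Equiv.swap d i d = Equiv.swap d i e0 := by rw [hs1d]; exact h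
    exact he0d ((Equiv.swap d i).injective h2).symm
  set π : Equiv.Perm (Fin L) :=
    (Equiv.swap d i).trans (Equiv.swap (Equiv.swap d i e0) j) with hπ
  have hπd : π d = i := by
    rw [hπ, Equiv.trans_apply, hs1d]
    exact Equiv.swap_apply_of_ne_of_ne hne1 hij
  have hπe : π e0 = j := by
    rw [hπ, Equiv.trans_apply]
    exact Equiv.swap_apply_left _ _
  -- evaluate the two weighted sums
  have H := Heq (fun k => ybase hlq (π.symm k))
  have hcnt : cnt (fun k => ybase hlq (π.symm k)) = cnt (ybase (L := L) hlq) :=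
    cnt_comp (ybase hlq) π.symm
  rw [hcnt] at H
  have hup : wsum (AStar hlq.le (cnt (ybase (L := L) hlq))).1 ω
      (fun k => ybase hlq (π.symm k)) = 1 - ω (π d) := by
    rw [wsum_comp_perm, hω1, hd, Finset.sum_singleton]
  have hlow : wsum ((Finset.image (ybase (L := L) hlq) Finset.univ).erase (ybase hlq e0)) ω
      (fun k => ybase hlq (π.symm k)) = 1 - ω (π e0) := by
    rw [wsum_comp_perm, hω1, filter_not_mem_erase hlq, hfib, Finset.sum_singleton]
  have hle := wsum_le_maxOmegaL ω (fun k => ybase hlq (π.symm k)) ⟨_, hBcard⟩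
  rw [H, hup] at hle
  have hle' : 1 - ω (π e0) ≤ 1 - ω (π d) := by
    rw [← hlow]
    exact hle
  rw [hπd, hπe] at hle'
  linarith

end FLAux

theorem fL_eq_uniform_iff (q ℓ L : ℕ) (hl2 : 2 ≤ ℓ) (hlq : ℓ < q) (hLl : ℓ < L)
    (P : Fin q → ℝ) (hP : IsDist P) (hPpos : ∀ x : Fin q, 0 < P x)
    (ω : Fin L → ℝ) (hω : IsDist ω) :
    fL ℓ P ω = fL ℓ P (fun _ : Fin L => 1 / (L : ℝ)) ↔ ω = fun _ : Fin L => 1 / (L : ℝ) := by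
  classical
  have hL0 : 0 < L := by omega
  have hLR : (0:ℝ) < L := by exact_mod_cast hL0
  constructor
  · intro h
    have hq1 : ℓ ≤ q := hlq.le
    -- the sums in `fL` agree
    have hg : ∑ x : Fin L → Fin q, (∏ i, P (x i)) * maxOmegaL ℓ ω x
        = ∑ x : Fin L → Fin q, (∏ i, P (x i)) * maxOmegaL ℓ (fun _ : Fin L => 1 / (L:ℝ)) x := by
      unfold fL at h
      linarith
    have hU : ∀ x : Fin L → Fin q, maxOmegaL ℓ (fun _ : Fin L => 1/(L:ℝ)) x
        = FLAux.wsum (FLAux.AStar hq1 (FLAux.cnt x)).1 (fun _ : Fin L => 1/(L:ℝ)) x :=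
      fun x => FLAux.maxOmegaL_uniform hq1 hL0 x
    set c : Fin L → ℝ := fun i => ∑ x : Fin L → Fin q,
      if x i ∈ (FLAux.AStar hq1 (FLAux.cnt x)).1 then ∏ k, P (x k) else 0 with hcdef
    set i0 : Fin L := ⟨0, hL0⟩ with hi0
    have hcconst : ∀ i : Fin L, c i = c i0 := fun i => FLAux.c_const hq1 P i i0
    -- uniform side evaluates to `c i0`
    have hsum1 : ∑ x : Fin L → Fin q,
        (∏ i, P (x i)) * maxOmegaL ℓ (fun _ : Fin L => 1/(L:ℝ)) x = c i0 := by
      rw [Finset.sum_congr rfl (fun x _ => by rw [hU x])]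
      rw [FLAux.sum_mul_wsum (fun x => ∏ i, P (x i))
        (fun x => (FLAux.AStar hq1 (FLAux.cnt x)).1) (fun _ => 1/(L:ℝ))]
      rw [Finset.sum_congr rfl (fun i _ => by rw [show (∑ x : Fin L → Fin q,
        if x i ∈ (FLAux.AStar hq1 (FLAux.cnt x)).1 then ∏ k, P (x k) else 0) = c i from rfl,
        hcconst i])]
      rw [Finset.sum_const, Finset.card_univ, Fintype.card_fin, nsmul_eq_mul]
      field_simp
    -- ω side with `wsum` also evaluates to `c i0`
    have hsum2 : ∑ x : Fin L → Fin q,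
        (∏ i, P (x i)) * FLAux.wsum (FLAux.AStar hq1 (FLAux.cnt x)).1 ω x = c i0 := by
      rw [FLAux.sum_mul_wsum (fun x => ∏ i, P (x i))
        (fun x => (FLAux.AStar hq1 (FLAux.cnt x)).1) ω]
      rw [Finset.sum_congr rfl (fun i _ => by rw [show (∑ x : Fin L → Fin q,
        if x i ∈ (FLAux.AStar hq1 (FLAux.cnt x)).1 then ∏ k, P (x k) else 0) = c i from rfl,
        hcconst i])]
      rw [← Finset.mul_sum, hω.2, mul_one]
    -- hence the two sums over x agree termwise
    have hgg : ∑ x : Fin L → Fin q,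
        (∏ i, P (x i)) * FLAux.wsum (FLAux.AStar hq1 (FLAux.cnt x)).1 ω x
        = ∑ x : Fin L → Fin q, (∏ i, P (x i)) * maxOmegaL ℓ ω x := by
      rw [hsum2, hg, hsum1]
    have hle : ∀ x ∈ (Finset.univ : Finset (Fin L → Fin q)),
        (∏ i, P (x i)) * FLAux.wsum (FLAux.AStar hq1 (FLAux.cnt x)).1 ω x
          ≤ (∏ i, P (x i)) * maxOmegaL ℓ ω x := by
      intro x _
      apply mul_le_mul_of_nonneg_left (FLAux.wsum_le_maxOmegaL ω x _)
      exact le_of_lt (Finset.prod_pos (fun i _ => hPpos (x i)))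
    have heach := (Finset.sum_eq_sum_iff_of_le hle).mp hgg
    have Heq : ∀ x : Fin L → Fin q,
        maxOmegaL ℓ ω x = FLAux.wsum (FLAux.AStar hq1 (FLAux.cnt x)).1 ω x := by
      intro x
      have hx := heach x (Finset.mem_univ x)
      have hpne : (∏ i, P (x i)) ≠ 0 :=
        ne_of_gt (Finset.prod_pos (fun i _ => hPpos (x i)))
      rcases mul_eq_mul_left_iff.mp hx with hx | hx
      · exact hx.symm
      · exact absurd hx hpne
    have hconst : ∀ i j : Fin L, ω i = ω j := by
      intro i j
      by_cases hij : i = j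
      · rw [hij]
      · exact le_antisymm (FLAux.omega_le hl2 hlq hLl ω hω.2 Heq i j hij)
          (FLAux.omega_le hl2 hlq hLl ω hω.2 Heq j i (Ne.symm hij))
    funext k
    have h1 : (L:ℝ) * ω k = 1 := by
      calc (L:ℝ) * ω k = ∑ _j : Fin L, ω k := by
            rw [Finset.sum_const, Finset.card_univ, Fintype.card_fin, nsmul_eq_mul]
        _ = ∑ j : Fin L, ω j := Finset.sum_congr rfl (fun j _ => hconst k j)
        _ = 1 := hω.2
    field_simp
    linarith
  · intro h
    rw [h]
end
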